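/- Let n ≥ 2 be an integer and α_max = (1/(n+1))(n/(n+1))ⁿ. The map α ↦ c_α = (n+1)u_α² - n, where u_α is the largest root of V_α(u) = u² - 1 + α u^{-2n}, is a strictly decreasing bijection from (-∞, α_max] onto [0, ∞), with c_0 = 1. -/

import Mathlib

lemma gmono (n : ℕ) (hn : 1 ≤ n) :
    StrictMonoOn (fun u : ℝ => u ^ (2*n+2) - u ^ (2*n))
      (Set.Ici (Real.sqrt ((n : ℝ) / (n + 1)))) := by
  have hn1 : (0:ℝ) < (n:ℝ) + 1 := by positivity
  have hnpos : (0:ℝ) < (n:ℝ) := by exact_mod_cast hn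
  have hu0pos : 0 < Real.sqrt ((n : ℝ) / (n + 1)) := Real.sqrt_pos.mpr (by positivity)
  have hu0sq : Real.sqrt ((n : ℝ) / (n + 1)) ^ 2 = (n:ℝ)/(n+1) :=
    Real.sq_sqrt (by positivity)
  apply strictMonoOn_of_deriv_pos (convex_Ici _) (by fun_prop)
  intro u hu
  rw [interior_Ici] at hu
  have hupos : 0 < u := lt_trans hu0pos hu
  have husq : (n:ℝ)/(n+1) < u ^ 2 := by
    rw [← hu0sq]
    exact pow_lt_pow_left₀ hu hu0pos.le (by norm_num)
  have hd : HasDerivAt (fun u : ℝ => u ^ (2*n+2) - u ^ (2*n))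
      ((2*n+2 : ℕ) * u ^ (2*n+1) - (2*n : ℕ) * u ^ (2*n-1)) u := by
    have h1 := hasDerivAt_pow (2*n+2) u
    have h2 := hasDerivAt_pow (2*n) u
    have e1 : 2*n+2-1 = 2*n+1 := by omega
    rw [e1] at h1
    exact h1.sub h2
  rw [hd.deriv]
  have key : ((2*n+2 : ℕ) : ℝ) * u ^ (2*n+1) - ((2*n : ℕ)) * u ^ (2*n-1)
      = 2 * u ^ (2*n-1) * (((n:ℝ)+1) * u^2 - n) := by
    obtain ⟨m, hm⟩ : ∃ m, n = m + 1 := ⟨n - 1, by omega⟩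
    subst hm
    have e : 2*(m+1)-1 = 2*m+1 := by omega
    rw [e]
    push_cast
    ring
  rw [key]
  have : 0 < ((n:ℝ)+1) * u^2 - n := by
    have := (div_lt_iff₀ hn1).mp husq
    linarith
  positivity

/-- The map `α ↦ c_α = (n+1)u_α² - n`, where `u_α` is the largest root of
`V_α(u) = u² - 1 + α u^(-2n)`, is a strictly decreasing bijection from
`(-∞, α_max]` onto `[0, ∞)` with `c_0 = 1`. -/
theorem stmt6 (n : ℕ) (hn : 2 ≤ n) (U : ℝ → ℝ)
    (hU : ∀ α ≤ (1 / ((n : ℝ) + 1)) * ((n : ℝ) / (n + 1)) ^ n,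
      IsGreatest {u : ℝ | 0 < u ∧ u ^ 2 - 1 + α / u ^ (2 * n) = 0} (U α)) :
    StrictAntiOn (fun α : ℝ => ((n : ℝ) + 1) * (U α) ^ 2 - n)
        (Set.Iic ((1 / ((n : ℝ) + 1)) * ((n : ℝ) / (n + 1)) ^ n)) ∧
    (fun α : ℝ => ((n : ℝ) + 1) * (U α) ^ 2 - n) ''
        (Set.Iic ((1 / ((n : ℝ) + 1)) * ((n : ℝ) / (n + 1)) ^ n)) = Set.Ici (0 : ℝ) ∧
    ((n : ℝ) + 1) * (U 0) ^ 2 - n = 1 := by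
  set A : ℝ := (1 / ((n : ℝ) + 1)) * ((n : ℝ) / (n + 1)) ^ n with hA
  set u0 : ℝ := Real.sqrt ((n : ℝ) / (n + 1)) with hu0
  have hn1 : (0:ℝ) < (n:ℝ) + 1 := by positivity
  have hnpos : (0:ℝ) < (n:ℝ) := by exact_mod_cast (by omega : 0 < n)
  have hApos : 0 < A := by positivity
  have hu0pos : 0 < u0 := Real.sqrt_pos.mpr (by positivity)
  have hu0sq : u0 ^ 2 = (n:ℝ)/(n+1) := Real.sq_sqrt (by positivity)
  -- value of g at u0
  have hg0u0 : u0 ^ (2*n+2) - u0 ^ (2*n) = -A := by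
    have e1 : u0 ^ (2*n) = ((n:ℝ)/(n+1)) ^ n := by
      rw [show 2*n = n*2 by ring, pow_mul']
      rw [hu0sq]
    have e2 : u0 ^ (2*n+2) = ((n:ℝ)/(n+1)) ^ (n+1) := by
      rw [show 2*n+2 = (n+1)*2 by ring, pow_mul']
      rw [hu0sq]
    rw [e1, e2, hA, pow_succ]
    field_simp
    ring
  -- membership characterization
  have hmemiff : ∀ (α : ℝ) (u : ℝ), 0 < u →
      (u ^ 2 - 1 + α / u ^ (2 * n) = 0 ↔ u ^ (2*n+2) - u ^ (2*n) = -α) := by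
    intro α u hu
    have hune : u ^ (2*n) ≠ 0 := by positivity
    constructor
    · intro h
      have h2 : (u ^ 2 - 1 + α / u ^ (2*n)) * u ^ (2*n) = 0 := by rw [h]; ring
      rw [add_mul, sub_mul, div_mul_cancel₀ _ hune] at h2
      linear_combination h2
    · intro h
      have h2 : (u^2 - 1) * u ^ (2*n) + α = 0 := by linear_combination h
      field_simp
      linear_combination h2

  have hG := gmono n (by omega)
  have hUmem : ∀ α ≤ A, 0 < U α ∧ (U α) ^ (2*n+2) - (U α) ^ (2*n) = -α := by
    intro α hα
    obtain ⟨⟨hpos, heq⟩, _⟩ := hU α hα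
    exact ⟨hpos, (hmemiff α _ hpos).mp heq⟩
  have hUge : ∀ α ≤ A, u0 ≤ U α := by
    intro α hα
    set M : ℝ := 1 + |α| with hM
    have hM1 : 1 ≤ M := le_add_of_nonneg_right (abs_nonneg α)
    have hu0le1 : u0 ≤ 1 := Real.sqrt_le_one.mpr (by rw [div_le_one hn1]; linarith)
    have hu0M : u0 ≤ M := hu0le1.trans hM1
    have hgM : -α ≤ M ^ (2*n+2) - M ^ (2*n) := by
      have h1 : (1:ℝ) ≤ M ^ (2*n) := one_le_pow₀ hM1
      have e : M ^ (2*n+2) - M ^ (2*n) = M ^ (2*n) * (M^2 - 1) := by ring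
      have hM2 : |α| ≤ M^2 - 1 := by nlinarith [abs_nonneg α]
      nlinarith [neg_abs_le α, abs_nonneg α]
    have hgu0 : u0 ^ (2*n+2) - u0 ^ (2*n) ≤ -α := by rw [hg0u0]; linarith
    have hcont : ContinuousOn (fun u : ℝ => u ^ (2*n+2) - u ^ (2*n)) (Set.Icc u0 M) := by
      fun_prop
    obtain ⟨v, hv, hveq⟩ := intermediate_value_Icc hu0M hcont ⟨hgu0, hgM⟩
    have hvpos : 0 < v := lt_of_lt_of_le hu0pos hv.1
    have hvle : v ≤ U α := (hU α hα).2 ⟨hvpos, (hmemiff α v hvpos).mpr hveq⟩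
    linarith [hv.1]
  have hUlt : ∀ a ∈ Set.Iic A, ∀ b ∈ Set.Iic A, a < b → U b < U a := by
    intro a ha b hb hab
    by_contra hcon
    push_neg at hcon
    have h1 := (hUmem a ha).2
    have h2 := (hUmem b hb).2
    have hmono := hG.monotoneOn (Set.mem_Ici.mpr (hUge a ha))
      (Set.mem_Ici.mpr (hUge b hb)) hcon
    rw [h1, h2] at hmono
    linarith
  refine ⟨?_, ?_, ?_⟩
  · intro a ha b hb hab
    have hlt := hUlt a ha b hb hab
    have hbpos : 0 < U b := (hUmem b hb).1
    have hsq : (U b)^2 < (U a)^2 := pow_lt_pow_left₀ hlt hbpos.le (by norm_num)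
    simp only
    nlinarith
  · apply Set.Subset.antisymm
    · rintro x ⟨α, hα, rfl⟩
      simp only [Set.mem_Ici]
      have h1 : u0 ≤ U α := hUge α hα
      have hsq : u0^2 ≤ (U α)^2 := pow_le_pow_left₀ hu0pos.le h1 2
      rw [hu0sq] at hsq
      have h2 := (div_le_iff₀ hn1).mp hsq
      show 0 ≤ ((n:ℝ)+1) * (U α)^2 - n
      nlinarith
    · intro c hc
      simp only [Set.mem_Ici] at hc
      set u : ℝ := Real.sqrt (((n:ℝ)+c)/((n:ℝ)+1)) with hudef
      have husq : u^2 = ((n:ℝ)+c)/((n:ℝ)+1) := Real.sq_sqrt (by positivity)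
      have hu0u : u0 ≤ u := Real.sqrt_le_sqrt (by gcongr; linarith)
      have hupos : 0 < u := lt_of_lt_of_le hu0pos hu0u
      set α : ℝ := -(u^(2*n+2) - u^(2*n)) with hαdef
      have hgu : u^(2*n+2) - u^(2*n) = -α := by rw [hαdef]; ring
      have hαA : α ≤ A := by
        have hmono := hG.monotoneOn (Set.mem_Ici.mpr le_rfl)
          (Set.mem_Ici.mpr hu0u) hu0u
        rw [hg0u0] at hmono
        linarith [hmono, hgu]
      have hUu : U α = u := by
        refine (hU α hαA).unique ⟨⟨hupos, (hmemiff α u hupos).mpr hgu⟩, ?_⟩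
        rintro v ⟨hvpos, hveq⟩
        by_contra hcon
        push_neg at hcon
        have hveq' := (hmemiff α v hvpos).mp hveq
        have hlt := hG (Set.mem_Ici.mpr hu0u) (Set.mem_Ici.mpr (hu0u.trans hcon.le)) hcon
        simp only at hlt
        rw [hveq', hgu] at hlt
        exact lt_irrefl _ hlt
      refine ⟨α, hαA, ?_⟩
      simp only
      rw [hUu, husq]
      field_simp
      ring
  · have hU0 : U 0 = 1 := by
      refine (hU 0 hApos.le).unique ⟨⟨one_pos, by norm_num⟩, ?_⟩
      rintro v ⟨hvpos, hveq⟩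
      simp only [zero_div, add_zero, sub_eq_zero] at hveq
      nlinarith
    rw [hU0]
    ring
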